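/- Let n ≥ 1 and let d = (d_1,…,d_{n−1}) be a tuple of strictly positive real numbers, and let X_d be the linear metric space on points x_1,…,x_n with d(x_i,x_j) = Σ_{s=i}^{j−1} d_s for i ≤ j. Then the function w given by w(x_i) = (1/2)(tanh(d_{i−1}/2) + tanh(d_i/2)), with the convention d_0 = d_n = ∞ (so tanh(∞/2) is read as 1, i.e. w(x_1) = (1/2)(1 + tanh(d_1/2)) and w(x_n) = (1/2)(tanh(d_{n−1}/2) + 1)), is a weighting on X_d, and the magnitude of X_d equals 1 + Σ_{i=1}^{n−1} tanh(d_i/2). -/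

import Mathlib

lemma key_tanh (x : ℝ) : Real.exp (-x) * (1 + Real.tanh (x/2)) + Real.tanh (x/2) = 1 := by
  rw [Real.tanh_eq_sinh_div_cosh, Real.sinh_eq, Real.cosh_eq]
  have e1 : Real.exp (-x) = Real.exp (-(x/2)) * Real.exp (-(x/2)) := by
    rw [← Real.exp_add]; ring_nf
  have e2 : Real.exp (x/2) * Real.exp (-(x/2)) = 1 := by
    rw [← Real.exp_add]; simp
  have e3 : Real.exp (-x/2) = Real.exp (-(x/2)) := by ring_nf
  have h2 : Real.exp (x/2) + Real.exp (-(x/2)) ≠ 0 := by positivity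
  field_simp
  nlinarith [e1, e2, Real.exp_pos (x/2), Real.exp_pos (-(x/2))]

theorem magnitude_linear_space (n : ℕ) (hn : 1 ≤ n) (d : ℕ → ℝ)
    (hd : ∀ i, i + 1 < n → 0 < d i) (w : ℕ → ℝ)
    (hw : ∀ i < n, w i = (1 / 2) *
      ((if i = 0 then 1 else Real.tanh (d (i - 1) / 2)) +
       (if i = n - 1 then 1 else Real.tanh (d i / 2)))) :
    (∀ i ∈ Finset.range n,
      ∑ j ∈ Finset.range n,
        Real.exp (-(∑ s ∈ Finset.Ico (min i j) (max i j), d s)) * w j = 1) ∧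
    ∑ i ∈ Finset.range n, w i = 1 + ∑ i ∈ Finset.range (n - 1), Real.tanh (d i / 2) := by
  have hA : ∀ i, i < n →
      ∑ j ∈ Finset.range (i+1), Real.exp (-(∑ s ∈ Finset.Ico j i, d s)) * w j
        = if i = n - 1 then 1 else (1/2) * (1 + Real.tanh (d i / 2)) := by
    intro i
    induction i with
    | zero =>
      intro h0
      rw [Finset.sum_range_one]
      simp only [Finset.Ico_self, Finset.sum_empty, neg_zero, Real.exp_zero, one_mul,
        hw 0 h0, if_pos rfl]
      split_ifs <;> norm_num
    | succ i ih =>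
      intro h
      have hi : i < n := Nat.lt_of_succ_lt h
      have hine : i ≠ n - 1 := by omega
      rw [Finset.sum_range_succ]
      have step : ∑ j ∈ Finset.range (i+1),
          Real.exp (-(∑ s ∈ Finset.Ico j (i+1), d s)) * w j
          = Real.exp (-d i) * ∑ j ∈ Finset.range (i+1),
              Real.exp (-(∑ s ∈ Finset.Ico j i, d s)) * w j := by
        rw [Finset.mul_sum]
        refine Finset.sum_congr rfl fun j hj => ?_
        rw [Finset.sum_Ico_succ_top (Nat.lt_succ_iff.mp (Finset.mem_range.mp hj)),
          neg_add, Real.exp_add]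
        ring
      rw [step, ih hi, if_neg hine, hw (i+1) h, if_neg (Nat.succ_ne_zero i)]
      have hk := key_tanh (d i)
      simp only [Nat.add_sub_cancel, Finset.Ico_self, Finset.sum_empty, neg_zero,
        Real.exp_zero, one_mul]
      split_ifs with h1
      · linarith
      · linarith
  have hB : ∀ m, ∀ i, i < n → n - 1 - i = m →
      ∑ j ∈ Finset.Ico i n, Real.exp (-(∑ s ∈ Finset.Ico i j, d s)) * w j
        = if i = 0 then 1 else (1/2) * (1 + Real.tanh (d (i-1) / 2)) := by
    intro m
    induction m with
    | zero =>
      intro i hi h0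
      have hie : i = n - 1 := by omega
      have hIco : Finset.Ico i n = {i} := by
        rw [show n = i + 1 by omega]; simp
      rw [hIco]
      simp only [Finset.sum_singleton, Finset.Ico_self, Finset.sum_empty, neg_zero,
        Real.exp_zero, one_mul, hw i hi, if_pos hie]
      split_ifs <;> ring
    | succ m ih =>
      intro i hi h
      have hi1 : i + 1 < n := by omega
      have hine : i ≠ n - 1 := by omega
      rw [Finset.sum_eq_sum_Ico_succ_bot hi]
      have step : ∑ j ∈ Finset.Ico (i+1) n,
          Real.exp (-(∑ s ∈ Finset.Ico i j, d s)) * w j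
          = Real.exp (-d i) * ∑ j ∈ Finset.Ico (i+1) n,
              Real.exp (-(∑ s ∈ Finset.Ico (i+1) j, d s)) * w j := by
        rw [Finset.mul_sum]
        refine Finset.sum_congr rfl fun j hj => ?_
        have hij : i < j := (Finset.mem_Ico.mp hj).1
        rw [Finset.sum_eq_sum_Ico_succ_bot hij, neg_add, Real.exp_add]
        ring
      rw [step, ih (i+1) hi1 (by omega), if_neg (Nat.succ_ne_zero i),
        hw i hi, if_neg hine]
      simp only [Finset.Ico_self, Finset.sum_empty, neg_zero, Real.exp_zero, one_mul,
        Nat.add_sub_cancel]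
      have hk := key_tanh (d i)
      split_ifs with h1
      · nlinarith
      · linarith
  constructor
  · intro i hi0
    have hi : i < n := Finset.mem_range.mp hi0
    have hsplit : ∑ j ∈ Finset.range n,
        Real.exp (-(∑ s ∈ Finset.Ico (min i j) (max i j), d s)) * w j
        = (∑ j ∈ Finset.range (i+1),
            Real.exp (-(∑ s ∈ Finset.Ico j i, d s)) * w j)
          + (∑ j ∈ Finset.Ico (i+1) n,
            Real.exp (-(∑ s ∈ Finset.Ico i j, d s)) * w j) := by
      rw [Finset.range_eq_Ico, ← Finset.sum_Ico_consecutive _ (Nat.zero_le (i+1)) hi,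
        ← Finset.range_eq_Ico]
      congr 1
      · refine Finset.sum_congr rfl fun j hj => ?_
        have hj' : j ≤ i := Nat.lt_succ_iff.mp (Finset.mem_range.mp hj)
        rw [min_eq_right hj', max_eq_left hj']
      · refine Finset.sum_congr rfl fun j hj => ?_
        have hj' : i ≤ j := le_of_lt (Finset.mem_Ico.mp hj).1
        rw [min_eq_left hj', max_eq_right hj']
    have hBi := hB (n - 1 - i) i hi rfl
    rw [Finset.sum_eq_sum_Ico_succ_bot hi] at hBi
    simp only [Finset.Ico_self, Finset.sum_empty, neg_zero, Real.exp_zero, one_mul] at hBi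
    rw [hsplit, hA i hi]
    have hwi := hw i hi
    split_ifs at hBi hwi ⊢ with h1 h2 h2 <;> linarith
  · obtain ⟨m, rfl⟩ : ∃ m, n = m + 1 := ⟨n - 1, by omega⟩
    have hsum : ∑ i ∈ Finset.range (m+1), w i
        = ∑ i ∈ Finset.range (m+1), (1 / 2) *
          ((if i = 0 then 1 else Real.tanh (d (i - 1) / 2)) +
           (if i = m+1 - 1 then 1 else Real.tanh (d i / 2))) :=
      Finset.sum_congr rfl fun i hi => hw i (Finset.mem_range.mp hi)
    rw [hsum]
    simp only [Nat.add_sub_cancel, mul_add, Finset.sum_add_distrib]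
    rw [Finset.sum_range_succ' (fun i => (1:ℝ)/2 * (if i = 0 then 1 else Real.tanh (d (i - 1) / 2)))]
    rw [Finset.sum_range_succ (fun i => (1:ℝ)/2 * (if i = m then 1 else Real.tanh (d i / 2)))]
    simp only [Nat.succ_ne_zero, if_false, if_pos rfl, Nat.add_sub_cancel, if_true]
    have h1 : ∑ i ∈ Finset.range m, (1:ℝ)/2 * Real.tanh (d i / 2)
        + ∑ i ∈ Finset.range m, (1:ℝ)/2 * Real.tanh (d i / 2)
        = ∑ i ∈ Finset.range m, Real.tanh (d i / 2) := by
      rw [← Finset.sum_add_distrib]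
      exact Finset.sum_congr rfl fun i _ => by ring
    have h2 : ∀ i ∈ Finset.range m, (1:ℝ)/2 * (if i = m then (1:ℝ) else Real.tanh (d i / 2)) = (1:ℝ)/2 * Real.tanh (d i / 2) := by
      intro i hi
      rw [if_neg (Nat.ne_of_lt (Finset.mem_range.mp hi))]
    rw [Finset.sum_congr rfl h2]
    linarith [h1]
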